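/- Let (S,E,I,R) be a classical solution of the 1D SEIR reaction–diffusion system on [0,T]×[0,L] with λ > 0. If the initial data are nonnegative, i.e. S(0,x) ≥ 0, E(0,x) ≥ 0, I(0,x) ≥ 0 and R(0,x) ≥ 0 for all x ∈ [0,L], then S(t,x) ≥ 0, E(t,x) ≥ 0, I(t,x) ≥ 0 and R(t,x) ≥ 0 for all (t,x) ∈ [0,T]×[0,L]. -/

import Mathlib

open Set Filter Topology

open Set Filter Topology

/-- Time derivative at a right-endpoint minimum is nonpositive. -/
lemma aux_deriv_nonpos_right {f : ℝ → ℝ} {t0 d : ℝ} (h0 : 0 < t0)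
    (hf : HasDerivAt f d t0) (hge : ∀ t ∈ Set.Ico 0 t0, 0 ≤ f t) (hft0 : f t0 = 0) :
    d ≤ 0 := by
  have hs : Tendsto (slope f t0) (𝓝[<] t0) (𝓝 d) :=
    (hasDerivAt_iff_tendsto_slope.1 hf).mono_left
      (nhdsWithin_mono _ (fun x hx => ne_of_lt hx))
  refine le_of_tendsto hs ?_
  filter_upwards [Ioo_mem_nhdsLT_of_mem (Set.mem_Ioc.2 ⟨h0, le_refl t0⟩)] with t ht
  have h1 : 0 ≤ f t := hge t ⟨le_of_lt ht.1, ht.2⟩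
  have h2 : t - t0 < 0 := by linarith [ht.2]
  rw [slope_def_field, hft0]
  exact div_nonpos_of_nonneg_of_nonpos (by linarith) (le_of_lt h2)

/-- One-sided derivative at a left-endpoint minimum is nonnegative. -/
lemma aux_deriv_nonneg_left {f : ℝ → ℝ} {a b d : ℝ} (hab : a < b)
    (hf : HasDerivWithinAt f d (Set.Icc a b) a)
    (hge : ∀ x ∈ Set.Icc a b, f a ≤ f x) : 0 ≤ d := by
  have hs : Tendsto (slope f a) (𝓝[Set.Icc a b \ {a}] a) (𝓝 d) :=
    hasDerivWithinAt_iff_tendsto_slope.1 hf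
  have hne : (𝓝[Set.Icc a b \ {a}] a).NeBot := by
    have h1 : a ∈ closure (Set.Icc a b \ {a}) := by
      have : Set.Ioc a b ⊆ Set.Icc a b \ {a} := fun x hx =>
        ⟨⟨le_of_lt hx.1, hx.2⟩, ne_of_gt hx.1⟩
      refine closure_mono this ?_
      rw [closure_Ioc (ne_of_lt hab)]
      exact ⟨le_refl a, le_of_lt hab⟩
    exact mem_closure_iff_nhdsWithin_neBot.1 h1
  refine ge_of_tendsto hs ?_
  filter_upwards [self_mem_nhdsWithin] with x hx
  have hxa : a < x := lt_of_le_of_ne hx.1.1 (Ne.symm hx.2)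
  rw [slope_def_field]
  exact div_nonneg (by linarith [hge x hx.1]) (by linarith)

/-- One-sided derivative at a right-endpoint minimum is nonpositive. -/
lemma aux_deriv_nonpos_rightpt {f : ℝ → ℝ} {a b d : ℝ} (hab : a < b)
    (hf : HasDerivWithinAt f d (Set.Icc a b) b)
    (hge : ∀ x ∈ Set.Icc a b, f b ≤ f x) : d ≤ 0 := by
  have hs : Tendsto (slope f b) (𝓝[Set.Icc a b \ {b}] b) (𝓝 d) :=
    hasDerivWithinAt_iff_tendsto_slope.1 hf
  have hne : (𝓝[Set.Icc a b \ {b}] b).NeBot := by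
    have h1 : b ∈ closure (Set.Icc a b \ {b}) := by
      have : Set.Ico a b ⊆ Set.Icc a b \ {b} := fun x hx =>
        ⟨⟨hx.1, le_of_lt hx.2⟩, ne_of_lt hx.2⟩
      refine closure_mono this ?_
      rw [closure_Ico (ne_of_lt hab)]
      exact ⟨le_of_lt hab, le_refl b⟩
    exact mem_closure_iff_nhdsWithin_neBot.1 h1
  refine le_of_tendsto hs ?_
  filter_upwards [self_mem_nhdsWithin] with x hx
  have hxb : x < b := lt_of_le_of_ne hx.1.2 hx.2
  rw [slope_def_field]
  exact div_nonpos_of_nonneg_of_nonpos (by linarith [hge x hx.1]) (by linarith)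

/-- Second derivative at an interior local minimum is nonnegative. -/
lemma aux_second_deriv_nonneg {g g' : ℝ → ℝ} {x0 c r : ℝ} (hr : 0 < r)
    (hg : ∀ x ∈ Set.Ioo (x0 - r) (x0 + r), HasDerivAt g (g' x) x)
    (hg' : HasDerivAt g' c x0)
    (hmin : ∀ x ∈ Set.Ioo (x0 - r) (x0 + r), g x0 ≤ g x) : 0 ≤ c := by
  have hx0mem : x0 ∈ Set.Ioo (x0 - r) (x0 + r) := by constructor <;> linarith
  have hnhds : Set.Ioo (x0 - r) (x0 + r) ∈ 𝓝 x0 := Ioo_mem_nhds (by linarith) (by linarith)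
  have hg'0 : g' x0 = 0 := by
    have hloc : IsLocalMin g x0 := by
      filter_upwards [hnhds] with x hx; exact hmin x hx
    exact hloc.hasDerivAt_eq_zero (hg x0 hx0mem)
  by_contra hc
  push_neg at hc
  -- slope of g' tends to c < 0 from the right, so g' < 0 just right of x0
  have hs : Tendsto (slope g' x0) (𝓝[>] x0) (𝓝 c) :=
    (hasDerivAt_iff_tendsto_slope.1 hg').mono_left
      (nhdsWithin_mono _ (fun x hx => ne_of_gt hx))
  have hev : ∀ᶠ x in 𝓝[>] x0, slope g' x0 x < 0 :=
    hs.eventually (Filter.Tendsto.eventually_lt_const hc tendsto_id |>.mono (fun _ h => h))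
  have hev2 : ∀ᶠ x in 𝓝[>] x0, g' x < 0 := by
    filter_upwards [hev, self_mem_nhdsWithin] with x hx hx2
    have hxx : x0 < x := hx2
    have : slope g' x0 x = (g' x - g' x0) / (x - x0) := slope_def_field g' x0 x
    rw [this, hg'0, sub_zero] at hx
    have := mul_neg_of_neg_of_pos hx (show (0:ℝ) < x - x0 by linarith)
    rw [div_mul_cancel₀] at this; · linarith
    · exact ne_of_gt (by linarith)
  rw [eventually_nhdsWithin_iff] at hev2
  rcases hev2.exists_Ioo_subset with ⟨l, u, hlu, hsub⟩
  -- pick u' small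
  set u' := min u (x0 + r) with hu'
  have hx0u' : x0 < u' := lt_min hlu.2 (by linarith)
  set m := (x0 + u') / 2 with hm
  have hmlt : x0 < m := by simp [hm]; linarith
  have hmlt2 : m < u' := by simp [hm]; linarith
  have hanti : StrictAntiOn g (Set.Icc x0 m) := by
    apply strictAntiOn_of_deriv_neg (convex_Icc _ _)
    · intro x hx
      have hxm : x ∈ Set.Ioo (x0 - r) (x0 + r) := by
        constructor
        · linarith [hx.1]
        · have : m < x0 + r := lt_of_lt_of_le hmlt2 (min_le_right _ _)
          linarith [hx.2]
      exact (hg x hxm).continuousAt.continuousWithinAt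
    · intro x hx
      rw [interior_Icc] at hx
      have hxm : x ∈ Set.Ioo (x0 - r) (x0 + r) := by
        constructor
        · linarith [hx.1]
        · have : m < x0 + r := lt_of_lt_of_le hmlt2 (min_le_right _ _)
          linarith [hx.2]
      have hder := (hg x hxm).deriv
      rw [hder]
      have hxIoo : x ∈ Set.Ioo l u := by
        constructor
        · linarith [hx.1, hlu.1]
        · have : m < u := lt_of_lt_of_le hmlt2 (min_le_left _ _)
          linarith [hx.2]
      exact hsub hxIoo hx.1
  have h1 : g m < g x0 :=
    hanti (Set.left_mem_Icc.2 (le_of_lt hmlt)) (Set.right_mem_Icc.2 (le_of_lt hmlt)) hmlt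
  have h2 : g x0 ≤ g m := by
    apply hmin
    constructor
    · linarith
    · have : m < x0 + r := lt_of_lt_of_le hmlt2 (min_le_right _ _)
      linarith
  linarith

/-- product lower bound -/
lemma aux_prod_bound {a b M Θ : ℝ} (hΘ : 0 ≤ Θ) (hM : 0 ≤ M)
    (ha : -Θ ≤ a) (ha' : a ≤ M) (hb : -Θ ≤ b) (hb' : b ≤ M) : -(Θ * M) ≤ a * b := by
  rcases le_or_gt 0 a with h | h <;> rcases le_or_gt 0 b with h' | h' <;> nlinarith

/-- Key maximum-principle step: at a first-touch point the touching point is interior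
and the reaction term is very negative. -/
lemma aux_key (L lam K ε t0 x0 : ℝ) (u ut ux uxx : ℝ → ℝ → ℝ)
    (hL : 0 < L) (hlam : 0 < lam) (hε : 0 < ε) (ht0 : 0 < t0)
    (hx0 : x0 ∈ Set.Icc 0 L)
    (hut : ∀ x ∈ Set.Ioo 0 L, HasDerivAt (fun τ => u τ x) (ut t0 x) t0)
    (hux : ∀ x ∈ Set.Icc 0 L, HasDerivWithinAt (fun y => u t0 y) (ux t0 x) (Set.Icc 0 L) x)
    (huxx : ∀ x ∈ Set.Ioo 0 L, HasDerivAt (fun y => ux t0 y) (uxx t0 x) x)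
    (hbc0 : ux t0 0 = 0) (hbcL : ux t0 L = 0)
    (htouch : u t0 x0 + ε * Real.exp (K * t0) * Real.cosh (x0 - L / 2) = 0)
    (hspace : ∀ x ∈ Set.Icc 0 L, 0 ≤ u t0 x + ε * Real.exp (K * t0) * Real.cosh (x - L / 2))
    (htime : ∀ t ∈ Set.Icc 0 t0, 0 ≤ u t x0 + ε * Real.exp (K * t) * Real.cosh (x0 - L / 2)) :
    x0 ∈ Set.Ioo 0 L ∧
      ut t0 x0 - lam * uxx t0 x0 ≤ ε * Real.exp (K * t0) * Real.cosh (x0 - L / 2) * (lam - K) := by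
  set c := ε * Real.exp (K * t0) with hc
  have hcpos : 0 < c := mul_pos hε (Real.exp_pos _)
  set g : ℝ → ℝ := fun x => u t0 x + c * Real.cosh (x - L / 2) with hgdef
  -- derivative of g within Icc
  have hgder : ∀ x ∈ Set.Icc 0 L,
      HasDerivWithinAt g (ux t0 x + c * Real.sinh (x - L / 2)) (Set.Icc 0 L) x := by
    intro x hx
    have h1 : HasDerivAt (fun y : ℝ => c * Real.cosh (y - L / 2)) (c * Real.sinh (x - L / 2)) x := by
      have := ((Real.hasDerivAt_cosh (x - L / 2)).comp x
        ((hasDerivAt_id x).sub_const (L / 2))).const_mul c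
      simpa using this
    exact (hux x hx).add h1.hasDerivWithinAt
  -- g is minimized at x0 over Icc with value 0
  have hg0 : g x0 = 0 := htouch
  have hgmin : ∀ x ∈ Set.Icc 0 L, g x0 ≤ g x := by
    intro x hx; rw [hg0]; exact hspace x hx
  -- x0 is not an endpoint
  have hsinh : 0 < Real.sinh (L / 2) := Real.sinh_pos_iff.2 (by linarith)
  have hx00 : x0 ≠ 0 := by
    intro h
    have hgmin0 : ∀ x ∈ Set.Icc 0 L, g 0 ≤ g x := by
      intro x hx; rw [← h]; exact hgmin x hx
    have hd := aux_deriv_nonneg_left hL (hgder 0 ⟨le_rfl, le_of_lt hL⟩) hgmin0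
    rw [hbc0, zero_add] at hd
    have : Real.sinh (0 - L / 2) < 0 := by
      rw [show (0 : ℝ) - L / 2 = -(L / 2) by ring, Real.sinh_neg]; linarith
    nlinarith
  have hx0L : x0 ≠ L := by
    intro h
    have hgminL : ∀ x ∈ Set.Icc 0 L, g L ≤ g x := by
      intro x hx; rw [← h]; exact hgmin x hx
    have hd := aux_deriv_nonpos_rightpt hL (hgder L ⟨le_of_lt hL, le_rfl⟩) hgminL
    rw [hbcL, zero_add] at hd
    have : 0 < Real.sinh (L - L / 2) := by
      rw [show L - L / 2 = L / 2 by ring]; exact hsinh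
    nlinarith
  have hx0I : x0 ∈ Set.Ioo 0 L :=
    ⟨lt_of_le_of_ne hx0.1 (Ne.symm hx00), lt_of_le_of_ne hx0.2 hx0L⟩
  refine ⟨hx0I, ?_⟩
  -- time derivative bound
  have htd : ut t0 x0 + c * K * Real.cosh (x0 - L / 2) ≤ 0 := by
    have hf : HasDerivAt (fun τ => u τ x0 + ε * Real.exp (K * τ) * Real.cosh (x0 - L / 2))
        (ut t0 x0 + ε * (K * Real.exp (K * t0)) * Real.cosh (x0 - L / 2)) t0 := by
      have h2 : HasDerivAt (fun τ : ℝ => ε * Real.exp (K * τ) * Real.cosh (x0 - L / 2))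
          (ε * (K * Real.exp (K * t0)) * Real.cosh (x0 - L / 2)) t0 := by
        have h3 : HasDerivAt (fun τ : ℝ => Real.exp (K * τ)) (K * Real.exp (K * t0)) t0 := by
          have := (Real.hasDerivAt_exp (K * t0)).comp t0
            ((hasDerivAt_id t0).const_mul K)
          simpa [mul_comm, Function.comp_def] using this
        exact (h3.const_mul ε).mul_const _
      exact (hut x0 hx0I).add h2
    have := aux_deriv_nonpos_right ht0 hf
      (fun t ht => htime t ⟨ht.1, le_of_lt ht.2⟩) htouch
    calc ut t0 x0 + c * K * Real.cosh (x0 - L / 2)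
        = ut t0 x0 + ε * (K * Real.exp (K * t0)) * Real.cosh (x0 - L / 2) := by rw [hc]; ring
      _ ≤ 0 := this
  -- second spatial derivative bound
  have hsd : 0 ≤ uxx t0 x0 + c * Real.cosh (x0 - L / 2) := by
    set r := min x0 (L - x0) with hr
    have hrpos : 0 < r := lt_min hx0I.1 (by linarith [hx0I.2])
    have hsub : Set.Ioo (x0 - r) (x0 + r) ⊆ Set.Icc 0 L := by
      intro x hx
      constructor
      · have : r ≤ x0 := min_le_left _ _
        linarith [hx.1]
      · have : r ≤ L - x0 := min_le_right _ _
        linarith [hx.2]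
    have hsubI : Set.Ioo (x0 - r) (x0 + r) ⊆ Set.Ioo 0 L := by
      intro x hx
      constructor
      · have : r ≤ x0 := min_le_left _ _
        linarith [hx.1]
      · have : r ≤ L - x0 := min_le_right _ _
        linarith [hx.2]
    apply aux_second_deriv_nonneg hrpos (g' := fun x => ux t0 x + c * Real.sinh (x - L / 2))
    · intro x hx
      have hmem : Set.Icc (0 : ℝ) L ∈ 𝓝 x := Icc_mem_nhds (hsubI hx).1 (hsubI hx).2
      exact (hgder x (hsub hx)).hasDerivAt hmem
    · have h1 : HasDerivAt (fun x : ℝ => c * Real.sinh (x - L / 2)) (c * Real.cosh (x0 - L / 2)) x0 := by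
        have := ((Real.hasDerivAt_sinh (x0 - L / 2)).comp x0
          ((hasDerivAt_id x0).sub_const (L / 2))).const_mul c
        simpa using this
      exact (huxx x0 hx0I).add h1
    · intro x hx; exact hgmin x (hsub hx)
  -- combine
  have hcosh : (0:ℝ) < Real.cosh (x0 - L / 2) := Real.cosh_pos _
  calc ut t0 x0 - lam * uxx t0 x0
      ≤ -(c * K * Real.cosh (x0 - L / 2)) + lam * (c * Real.cosh (x0 - L / 2)) := by nlinarith
    _ = ε * Real.exp (K * t0) * Real.cosh (x0 - L / 2) * (lam - K) := by rw [hc]; ring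


lemma aux_limit {a c : ℝ} (hc : 0 < c) (h : ∀ ε > 0, 0 ≤ a + ε * c) : 0 ≤ a := by
  by_contra hn
  push_neg at hn
  have h2 := h (-a / (2 * c)) (by apply div_pos (by linarith) (by linarith))
  have h3 : -a / (2 * c) * c = -a / 2 := by field_simp
  rw [h3] at h2
  linarith

lemma aux_final {lam Ch C0 K εe c0 Θ F : ℝ}
    (hεe : 0 < εe) (hC0 : 0 ≤ C0) (hCh : 1 ≤ Ch) (hc0 : εe ≤ c0) (hΘ : c0 ≤ Θ)
    (hΘdef : Θ = εe * Ch) (hK : K = lam + Ch * C0 + 1)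
    (hFle : F ≤ c0 * (lam - K)) (hFlb : -(Θ * C0) ≤ F) : False := by
  have h1 : c0 * (lam - K) = -(c0 * (Ch * C0)) - c0 := by rw [hK]; ring
  have h2 : εe * (Ch * C0) ≤ c0 * (Ch * C0) :=
    mul_le_mul_of_nonneg_right hc0 (by positivity)
  have h3 : Θ * C0 = εe * (Ch * C0) := by rw [hΘdef]; ring
  linarith




set_option maxHeartbeats 2000000 in
/-- A classical solution of the 1D SEIR reaction–diffusion system on
`[0,T]×[0,L]` with nonnegative initial data stays nonnegative on `[0,T]×[0,L]`. -/
theorem seir_classical_solution_nonneg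
    (Λ μ β p δ η γ lam T L : ℝ)
    (hΛ : 0 ≤ Λ) (hμ : 0 < μ) (hβ : 0 ≤ β) (hp0 : 0 ≤ p) (hp1 : p ≤ 1)
    (hδ : 0 ≤ δ) (hη : 0 ≤ η) (hγ : 0 ≤ γ) (hlam : 0 < lam)
    (hT : 0 < T) (hL : 0 < L)
    (S E I R : ℝ → ℝ → ℝ)
    -- partial derivatives: in time (·t), first (·x) and second (·xx) in space
    (St Et It Rt Sx Ex Ix Rx Sxx Exx Ixx Rxx : ℝ → ℝ → ℝ)
    -- continuity on the closed space-time cylinder [0,T] × [0,L]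
    (hScont : ContinuousOn (fun q : ℝ × ℝ => S q.1 q.2) (Set.Icc 0 T ×ˢ Set.Icc 0 L))
    (hEcont : ContinuousOn (fun q : ℝ × ℝ => E q.1 q.2) (Set.Icc 0 T ×ˢ Set.Icc 0 L))
    (hIcont : ContinuousOn (fun q : ℝ × ℝ => I q.1 q.2) (Set.Icc 0 T ×ˢ Set.Icc 0 L))
    (hRcont : ContinuousOn (fun q : ℝ × ℝ => R q.1 q.2) (Set.Icc 0 T ×ˢ Set.Icc 0 L))
    -- time partial derivatives on (0,T] × (0,L)
    (hSt : ∀ t ∈ Set.Ioc 0 T, ∀ x ∈ Set.Ioo 0 L, HasDerivAt (fun τ => S τ x) (St t x) t)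
    (hEt : ∀ t ∈ Set.Ioc 0 T, ∀ x ∈ Set.Ioo 0 L, HasDerivAt (fun τ => E τ x) (Et t x) t)
    (hIt : ∀ t ∈ Set.Ioc 0 T, ∀ x ∈ Set.Ioo 0 L, HasDerivAt (fun τ => I τ x) (It t x) t)
    (hRt : ∀ t ∈ Set.Ioc 0 T, ∀ x ∈ Set.Ioo 0 L, HasDerivAt (fun τ => R τ x) (Rt t x) t)
    -- first spatial partial derivatives on (0,T] × [0,L] (one-sided at the endpoints)
    (hSx : ∀ t ∈ Set.Ioc 0 T, ∀ x ∈ Set.Icc 0 L,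
      HasDerivWithinAt (fun y => S t y) (Sx t x) (Set.Icc 0 L) x)
    (hEx : ∀ t ∈ Set.Ioc 0 T, ∀ x ∈ Set.Icc 0 L,
      HasDerivWithinAt (fun y => E t y) (Ex t x) (Set.Icc 0 L) x)
    (hIx : ∀ t ∈ Set.Ioc 0 T, ∀ x ∈ Set.Icc 0 L,
      HasDerivWithinAt (fun y => I t y) (Ix t x) (Set.Icc 0 L) x)
    (hRx : ∀ t ∈ Set.Ioc 0 T, ∀ x ∈ Set.Icc 0 L,
      HasDerivWithinAt (fun y => R t y) (Rx t x) (Set.Icc 0 L) x)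
    -- second spatial partial derivatives on (0,T] × (0,L)
    (hSxx : ∀ t ∈ Set.Ioc 0 T, ∀ x ∈ Set.Ioo 0 L, HasDerivAt (fun y => Sx t y) (Sxx t x) x)
    (hExx : ∀ t ∈ Set.Ioc 0 T, ∀ x ∈ Set.Ioo 0 L, HasDerivAt (fun y => Ex t y) (Exx t x) x)
    (hIxx : ∀ t ∈ Set.Ioc 0 T, ∀ x ∈ Set.Ioo 0 L, HasDerivAt (fun y => Ix t y) (Ixx t x) x)
    (hRxx : ∀ t ∈ Set.Ioc 0 T, ∀ x ∈ Set.Ioo 0 L, HasDerivAt (fun y => Rx t y) (Rxx t x) x)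
    -- the SEIR reaction–diffusion equations on (0,T] × (0,L)
    (heqS : ∀ t ∈ Set.Ioc 0 T, ∀ x ∈ Set.Ioo 0 L,
      St t x = lam * Sxx t x + Λ - β * S t x * I t x - μ * S t x)
    (heqE : ∀ t ∈ Set.Ioc 0 T, ∀ x ∈ Set.Ioo 0 L,
      Et t x = lam * Exx t x + β * p * S t x * I t x - (δ + η + μ) * E t x)
    (heqI : ∀ t ∈ Set.Ioc 0 T, ∀ x ∈ Set.Ioo 0 L,
      It t x = lam * Ixx t x + β * (1 - p) * S t x * I t x + δ * E t x - (γ + μ) * I t x)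
    (heqR : ∀ t ∈ Set.Ioc 0 T, ∀ x ∈ Set.Ioo 0 L,
      Rt t x = lam * Rxx t x + η * E t x + γ * I t x - μ * R t x)
    -- homogeneous Neumann boundary conditions
    (hbcS : ∀ t ∈ Set.Ioc 0 T, Sx t 0 = 0 ∧ Sx t L = 0)
    (hbcE : ∀ t ∈ Set.Ioc 0 T, Ex t 0 = 0 ∧ Ex t L = 0)
    (hbcI : ∀ t ∈ Set.Ioc 0 T, Ix t 0 = 0 ∧ Ix t L = 0)
    (hbcR : ∀ t ∈ Set.Ioc 0 T, Rx t 0 = 0 ∧ Rx t L = 0)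
    -- nonnegative initial data
    (hS0 : ∀ x ∈ Set.Icc 0 L, 0 ≤ S 0 x) (hE0 : ∀ x ∈ Set.Icc 0 L, 0 ≤ E 0 x)
    (hI0 : ∀ x ∈ Set.Icc 0 L, 0 ≤ I 0 x) (hR0 : ∀ x ∈ Set.Icc 0 L, 0 ≤ R 0 x) :
    ∀ t ∈ Set.Icc 0 T, ∀ x ∈ Set.Icc 0 L,
      0 ≤ S t x ∧ 0 ≤ E t x ∧ 0 ≤ I t x ∧ 0 ≤ R t x := by
  classical
  set Q : Set (ℝ × ℝ) := Set.Icc 0 T ×ˢ Set.Icc 0 L with hQdef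
  have hQc : IsCompact Q := isCompact_Icc.prod isCompact_Icc
  have hQcl : IsClosed Q := isClosed_Icc.prod isClosed_Icc
  obtain ⟨Ms, hMs⟩ := hQc.exists_bound_of_continuousOn hScont
  obtain ⟨Me, hMe⟩ := hQc.exists_bound_of_continuousOn hEcont
  obtain ⟨Mi, hMi⟩ := hQc.exists_bound_of_continuousOn hIcont
  obtain ⟨Mr, hMr⟩ := hQc.exists_bound_of_continuousOn hRcont
  set M : ℝ := max 0 (max (max Ms Me) (max Mi Mr)) with hMdef
  have hM0 : 0 ≤ M := le_max_left _ _
  have hMS : ∀ t ∈ Set.Icc 0 T, ∀ x ∈ Set.Icc 0 L, |S t x| ≤ M := by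
    intro t ht x hx
    have := hMs (t, x) (Set.mk_mem_prod ht hx)
    rw [Real.norm_eq_abs] at this
    exact le_trans this (le_trans (le_max_left _ _) (le_trans (le_max_left _ _) (le_max_right _ _)))
  have hME : ∀ t ∈ Set.Icc 0 T, ∀ x ∈ Set.Icc 0 L, |E t x| ≤ M := by
    intro t ht x hx
    have := hMe (t, x) (Set.mk_mem_prod ht hx)
    rw [Real.norm_eq_abs] at this
    exact le_trans this (le_trans (le_max_right _ _) (le_trans (le_max_left _ _) (le_max_right _ _)))
  have hMI : ∀ t ∈ Set.Icc 0 T, ∀ x ∈ Set.Icc 0 L, |I t x| ≤ M := by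
    intro t ht x hx
    have := hMi (t, x) (Set.mk_mem_prod ht hx)
    rw [Real.norm_eq_abs] at this
    exact le_trans this (le_trans (le_max_left _ _) (le_trans (le_max_right _ _) (le_max_right _ _)))
  have hMR : ∀ t ∈ Set.Icc 0 T, ∀ x ∈ Set.Icc 0 L, |R t x| ≤ M := by
    intro t ht x hx
    have := hMr (t, x) (Set.mk_mem_prod ht hx)
    rw [Real.norm_eq_abs] at this
    exact le_trans this (le_trans (le_max_right _ _) (le_trans (le_max_right _ _) (le_max_right _ _)))
  set C0 : ℝ := β * M + δ + η + γ with hC0def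
  have hC0 : 0 ≤ C0 := by positivity
  set Ch : ℝ := Real.cosh (L / 2) with hChdef
  have hCh : 1 ≤ Ch := Real.one_le_cosh _
  set K : ℝ := lam + Ch * C0 + 1 with hKdef
  have hcoshle : ∀ x ∈ Set.Icc (0:ℝ) L, Real.cosh (x - L / 2) ≤ Ch := by
    intro x hx
    rw [hChdef]
    rw [Real.cosh_le_cosh]
    rw [abs_of_pos (by linarith : (0:ℝ) < L / 2), abs_le]
    constructor <;> linarith [hx.1, hx.2]
  have hcosh1 : ∀ x : ℝ, 1 ≤ Real.cosh (x - L / 2) := fun x => Real.one_le_cosh _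
  -- the main perturbed claim
  have main : ∀ ε > 0, ∀ t ∈ Set.Icc 0 T, ∀ x ∈ Set.Icc 0 L,
      0 ≤ S t x + ε * Real.exp (K * t) * Real.cosh (x - L / 2) ∧
      0 ≤ E t x + ε * Real.exp (K * t) * Real.cosh (x - L / 2) ∧
      0 ≤ I t x + ε * Real.exp (K * t) * Real.cosh (x - L / 2) ∧
      0 ≤ R t x + ε * Real.exp (K * t) * Real.cosh (x - L / 2) := by
    intro ε hε
    set P : ℝ × ℝ → ℝ := fun q => ε * Real.exp (K * q.1) * Real.cosh (q.2 - L / 2) with hPdef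
    have hPc : Continuous P := by fun_prop
    have hPpos : ∀ q : ℝ × ℝ, 0 < P q := fun q => by
      have := Real.cosh_pos (q.2 - L / 2)
      have := Real.exp_pos (K * q.1)
      positivity
    set g : ℝ × ℝ → ℝ := fun q =>
      min (min (S q.1 q.2 + P q) (E q.1 q.2 + P q)) (min (I q.1 q.2 + P q) (R q.1 q.2 + P q))
      with hgdef
    have hgS : ∀ q, g q ≤ S q.1 q.2 + P q := fun q =>
      le_trans (min_le_left _ _) (min_le_left _ _)
    have hgE : ∀ q, g q ≤ E q.1 q.2 + P q := fun q =>
      le_trans (min_le_left _ _) (min_le_right _ _)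
    have hgI : ∀ q, g q ≤ I q.1 q.2 + P q := fun q =>
      le_trans (min_le_right _ _) (min_le_left _ _)
    have hgR : ∀ q, g q ≤ R q.1 q.2 + P q := fun q =>
      le_trans (min_le_right _ _) (min_le_right _ _)
    have hgcont : ContinuousOn g Q :=
      ((hScont.add hPc.continuousOn).inf (hEcont.add hPc.continuousOn)).inf
        ((hIcont.add hPc.continuousOn).inf (hRcont.add hPc.continuousOn))
    -- main positivity claim on g
    have hgpos : ∀ q ∈ Q, 0 ≤ g q := by
      by_contra hcon
      push_neg at hcon
      obtain ⟨qb, hqbQ, hqb⟩ := hcon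
      set B : Set (ℝ × ℝ) := {q | q ∈ Q ∧ g q ≤ 0} with hBdef
      have hBsub : B ⊆ Q := fun q hq => hq.1
      have hBne : B.Nonempty := ⟨qb, hqbQ, le_of_lt hqb⟩
      have hBcl : IsClosed B := by
        rw [← closure_subset_iff_isClosed]
        intro q hq
        have hqQ : q ∈ Q := hQcl.closure_subset (closure_mono hBsub hq)
        refine ⟨hqQ, ?_⟩
        have hcwa : ContinuousWithinAt g B q := ((hgcont q hqQ).mono hBsub)
        have := hcwa.mem_closure_image hq
        have himg : g '' B ⊆ Set.Iic 0 := by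
          rintro y ⟨z, hz, rfl⟩; exact hz.2
        have := closure_mono himg this
        rwa [closure_Iic] at this
      have hBc : IsCompact B := IsCompact.of_isClosed_subset hQc hBcl hBsub
      obtain ⟨⟨t0, x0⟩, hq0B, hq0min⟩ := hBc.exists_isMinOn hBne continuous_fst.continuousOn
      have ht0T : t0 ∈ Set.Icc 0 T := hq0B.1.1
      have hx0 : x0 ∈ Set.Icc 0 L := hq0B.1.2
      have ht0pos : 0 < t0 := by
        rcases lt_or_eq_of_le ht0T.1 with h | h
        · exact h
        · exfalso
          have hgq : g (t0, x0) ≤ 0 := hq0B.2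
          have hP0 : 0 < P (t0, x0) := hPpos _
          have h1 : 0 < g (t0, x0) := by
            rw [← h]
            simp only [hgdef]
            refine lt_min (lt_min ?_ ?_) (lt_min ?_ ?_) <;>
              [linarith [hS0 x0 hx0, hP0, hPpos ((0:ℝ), x0)];
               linarith [hE0 x0 hx0, hPpos ((0:ℝ), x0)];
               linarith [hI0 x0 hx0, hPpos ((0:ℝ), x0)];
               linarith [hR0 x0 hx0, hPpos ((0:ℝ), x0)]]
          linarith
      have hpre : ∀ q ∈ Q, q.1 < t0 → 0 < g q := by
        intro q hqQ hqlt
        by_contra hng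
        push_neg at hng
        have : (t0, x0).1 ≤ q.1 := hq0min (⟨hqQ, hng⟩ : q ∈ B)
        simp at this
        linarith
      have hAt0 : ∀ x ∈ Set.Icc 0 L, 0 ≤ g (t0, x) := by
        intro x hx
        set φ : ℝ → ℝ := fun t => g (t, x) with hφdef
        have hφc : ContinuousWithinAt φ (Set.Ico 0 t0) t0 := by
          have h1 : ContinuousOn φ (Set.Icc 0 T) := by
            apply hgcont.comp (Continuous.continuousOn (by fun_prop))
            intro t ht
            exact Set.mk_mem_prod ht hx
          exact (h1 t0 ht0T).mono (fun t ht => ⟨ht.1, le_trans (le_of_lt ht.2) ht0T.2⟩)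
        have hcl : t0 ∈ closure (Set.Ico 0 t0) := by
          rw [closure_Ico (ne_of_lt ht0pos)]
          exact ⟨le_of_lt ht0pos, le_rfl⟩
        have := hφc.mem_closure_image hcl
        have himg : φ '' Set.Ico 0 t0 ⊆ Set.Ici 0 := by
          rintro y ⟨s, hs, rfl⟩
          exact le_of_lt (hpre (s, x) (Set.mk_mem_prod ⟨hs.1, le_trans (le_of_lt hs.2) ht0T.2⟩ hx) hs.2)
        have := closure_mono himg this
        rwa [closure_Ici] at this
      have hfull : ∀ τ ∈ Set.Icc 0 t0, ∀ x ∈ Set.Icc 0 L, 0 ≤ g (τ, x) := by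
        intro τ hτ x hx
        rcases lt_or_eq_of_le hτ.2 with h | h
        · exact le_of_lt (hpre (τ, x) (Set.mk_mem_prod ⟨hτ.1, le_trans (le_of_lt h) ht0T.2⟩ hx) h)
        · rw [h]; exact hAt0 x hx
      have hg0 : g (t0, x0) = 0 := le_antisymm hq0B.2 (hAt0 x0 hx0)
      -- componentwise nonnegativity on [0,t0] × [0,L]
      have hwS : ∀ τ ∈ Set.Icc 0 t0, ∀ x ∈ Set.Icc 0 L, 0 ≤ S τ x + P (τ, x) :=
        fun τ hτ x hx => le_trans (hfull τ hτ x hx) (hgS (τ, x))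
      have hwE : ∀ τ ∈ Set.Icc 0 t0, ∀ x ∈ Set.Icc 0 L, 0 ≤ E τ x + P (τ, x) :=
        fun τ hτ x hx => le_trans (hfull τ hτ x hx) (hgE (τ, x))
      have hwI : ∀ τ ∈ Set.Icc 0 t0, ∀ x ∈ Set.Icc 0 L, 0 ≤ I τ x + P (τ, x) :=
        fun τ hτ x hx => le_trans (hfull τ hτ x hx) (hgI (τ, x))
      have hwR : ∀ τ ∈ Set.Icc 0 t0, ∀ x ∈ Set.Icc 0 L, 0 ≤ R τ x + P (τ, x) :=
        fun τ hτ x hx => le_trans (hfull τ hτ x hx) (hgR (τ, x))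
      have ht0Ioc : t0 ∈ Set.Ioc 0 T := ⟨ht0pos, ht0T.2⟩
      have ht0mem : t0 ∈ Set.Icc 0 t0 := ⟨le_of_lt ht0pos, le_rfl⟩
      -- useful scalars
      set c0 : ℝ := ε * Real.exp (K * t0) * Real.cosh (x0 - L / 2) with hc0def
      set εe : ℝ := ε * Real.exp (K * t0) with hεedef
      set Θ : ℝ := εe * Ch with hΘdef
      have hεepos : 0 < εe := mul_pos hε (Real.exp_pos _)
      have hεec0 : εe ≤ c0 := by
        rw [hc0def]
        exact le_mul_of_one_le_right hεepos.le (hcosh1 x0)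
      have hc0Θ : c0 ≤ Θ := by
        rw [hc0def, hΘdef]
        exact mul_le_mul_of_nonneg_left (hcoshle x0 hx0) hεepos.le
      have hc0pos : 0 < c0 := lt_of_lt_of_le hεepos hεec0
      have hΘpos : 0 < Θ := lt_of_lt_of_le hc0pos hc0Θ
      have hPq0 : P (t0, x0) = c0 := rfl
      -- bounds at (t0, x0)
      have hSb : -Θ ≤ S t0 x0 ∧ S t0 x0 ≤ M :=
        ⟨by have := hwS t0 ht0mem x0 hx0; rw [hPq0] at this; linarith,
         (abs_le.1 (hMS t0 ht0T x0 hx0)).2⟩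
      have hEb : -Θ ≤ E t0 x0 ∧ E t0 x0 ≤ M :=
        ⟨by have := hwE t0 ht0mem x0 hx0; rw [hPq0] at this; linarith,
         (abs_le.1 (hME t0 ht0T x0 hx0)).2⟩
      have hIb : -Θ ≤ I t0 x0 ∧ I t0 x0 ≤ M :=
        ⟨by have := hwI t0 ht0mem x0 hx0; rw [hPq0] at this; linarith,
         (abs_le.1 (hMI t0 ht0T x0 hx0)).2⟩
      have hRb : -Θ ≤ R t0 x0 ∧ R t0 x0 ≤ M :=
        ⟨by have := hwR t0 ht0mem x0 hx0; rw [hPq0] at this; linarith,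
         (abs_le.1 (hMR t0 ht0T x0 hx0)).2⟩
      have hSI : -(Θ * M) ≤ S t0 x0 * I t0 x0 :=
        aux_prod_bound (le_of_lt hΘpos) hM0 hSb.1 hSb.2 hIb.1 hIb.2
      -- the minimum is attained by one of the four components; in each case derive False
      have hmin4 : S t0 x0 + c0 = 0 ∨ E t0 x0 + c0 = 0 ∨ I t0 x0 + c0 = 0 ∨ R t0 x0 + c0 = 0 := by
        have h1 := hg0
        rw [hgdef] at h1
        simp only at h1
        rcases min_cases (min (S t0 x0 + P (t0, x0)) (E t0 x0 + P (t0, x0)))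
            (min (I t0 x0 + P (t0, x0)) (R t0 x0 + P (t0, x0))) with ⟨he, _⟩ | ⟨he, _⟩ <;>
          rw [he] at h1
        · rcases min_cases (S t0 x0 + P (t0, x0)) (E t0 x0 + P (t0, x0)) with ⟨he2, _⟩ | ⟨he2, _⟩ <;>
            rw [he2] at h1
          · exact Or.inl (by rw [hPq0] at h1; exact h1)
          · exact Or.inr (Or.inl (by rw [hPq0] at h1; exact h1))
        · rcases min_cases (I t0 x0 + P (t0, x0)) (R t0 x0 + P (t0, x0)) with ⟨he2, _⟩ | ⟨he2, _⟩ <;>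
            rw [he2] at h1
          · exact Or.inr (Or.inr (Or.inl (by rw [hPq0] at h1; exact h1)))
          · exact Or.inr (Or.inr (Or.inr (by rw [hPq0] at h1; exact h1)))
      rcases hmin4 with htouch | htouch | htouch | htouch
      · -- S touches zero
        obtain ⟨hx0I, hFle⟩ := aux_key L lam K ε t0 x0 S St Sx Sxx hL hlam hε ht0pos hx0
          (fun x hx => hSt t0 ht0Ioc x hx) (hSx t0 ht0Ioc) (hSxx t0 ht0Ioc)
          (hbcS t0 ht0Ioc).1 (hbcS t0 ht0Ioc).2 htouch
          (fun x hx => by have := hwS t0 ht0mem x hx; exact this)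
          (fun t ht => by have := hwS t ht x0 hx0; exact this)
        have hpde := heqS t0 ht0Ioc x0 hx0I
        have hSval : S t0 x0 = -c0 := by linarith
        have hF : St t0 x0 - lam * Sxx t0 x0 = Λ + β * c0 * I t0 x0 + μ * c0 := by
          rw [hpde, hSval]; ring
        have hFlb : -(Θ * C0) ≤ St t0 x0 - lam * Sxx t0 x0 := by
          rw [hF, hC0def]
          have hIM : -M ≤ I t0 x0 := (abs_le.1 (hMI t0 ht0T x0 hx0)).1
          have h1 : 0 ≤ β * c0 * (I t0 x0 + M) :=
            mul_nonneg (mul_nonneg hβ hc0pos.le) (by linarith)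
          have h2 : β * c0 * M ≤ β * Θ * M :=
            mul_le_mul_of_nonneg_right (mul_le_mul_of_nonneg_left hc0Θ hβ) hM0
          linarith [mul_nonneg hΘpos.le hδ, mul_nonneg hΘpos.le hη,
            mul_nonneg hΘpos.le hγ, mul_pos hμ hc0pos, hΛ]
        exact aux_final hεepos hC0 hCh hεec0 hc0Θ hΘdef hKdef hFle hFlb
      · -- E touches zero
        obtain ⟨hx0I, hFle⟩ := aux_key L lam K ε t0 x0 E Et Ex Exx hL hlam hε ht0pos hx0
          (fun x hx => hEt t0 ht0Ioc x hx) (hEx t0 ht0Ioc) (hExx t0 ht0Ioc)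
          (hbcE t0 ht0Ioc).1 (hbcE t0 ht0Ioc).2 htouch
          (fun x hx => by have := hwE t0 ht0mem x hx; exact this)
          (fun t ht => by have := hwE t ht x0 hx0; exact this)
        have hpde := heqE t0 ht0Ioc x0 hx0I
        have hEval : E t0 x0 = -c0 := by linarith
        have hF : Et t0 x0 - lam * Exx t0 x0 = β * p * (S t0 x0 * I t0 x0) + (δ + η + μ) * c0 := by
          rw [hpde, hEval]; ring
        have hFlb : -(Θ * C0) ≤ Et t0 x0 - lam * Exx t0 x0 := by
          rw [hF, hC0def]
          have h1 : (β * p) * (-(Θ * M)) ≤ (β * p) * (S t0 x0 * I t0 x0) :=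
            mul_le_mul_of_nonneg_left hSI (mul_nonneg hβ hp0)
          have h2 : (β * p) * (Θ * M) ≤ β * (Θ * M) :=
            mul_le_mul_of_nonneg_right (mul_le_of_le_one_right hβ hp1) (mul_nonneg hΘpos.le hM0)
          linarith [mul_nonneg hΘpos.le hδ, mul_nonneg hΘpos.le hη,
            mul_nonneg hΘpos.le hγ, mul_pos hμ hc0pos,
            mul_nonneg hδ hc0pos.le, mul_nonneg hη hc0pos.le]
        exact aux_final hεepos hC0 hCh hεec0 hc0Θ hΘdef hKdef hFle hFlb
      · -- I touches zero
        obtain ⟨hx0I, hFle⟩ := aux_key L lam K ε t0 x0 I It Ix Ixx hL hlam hε ht0pos hx0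
          (fun x hx => hIt t0 ht0Ioc x hx) (hIx t0 ht0Ioc) (hIxx t0 ht0Ioc)
          (hbcI t0 ht0Ioc).1 (hbcI t0 ht0Ioc).2 htouch
          (fun x hx => by have := hwI t0 ht0mem x hx; exact this)
          (fun t ht => by have := hwI t ht x0 hx0; exact this)
        have hpde := heqI t0 ht0Ioc x0 hx0I
        have hIval : I t0 x0 = -c0 := by linarith
        have hF : It t0 x0 - lam * Ixx t0 x0
            = β * (1 - p) * (S t0 x0 * I t0 x0) + δ * E t0 x0 + (γ + μ) * c0 := by
          rw [hpde, hIval]; ring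
        have hFlb : -(Θ * C0) ≤ It t0 x0 - lam * Ixx t0 x0 := by
          rw [hF, hC0def]
          have h1 : (β * (1 - p)) * (-(Θ * M)) ≤ (β * (1 - p)) * (S t0 x0 * I t0 x0) :=
            mul_le_mul_of_nonneg_left hSI (mul_nonneg hβ (by linarith))
          have h2 : (β * (1 - p)) * (Θ * M) ≤ β * (Θ * M) :=
            mul_le_mul_of_nonneg_right (mul_le_of_le_one_right hβ (by linarith))
              (mul_nonneg hΘpos.le hM0)
          have h3 : δ * (-Θ) ≤ δ * E t0 x0 := mul_le_mul_of_nonneg_left hEb.1 hδ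
          linarith [mul_nonneg hΘpos.le hη, mul_nonneg hΘpos.le hγ,
            mul_pos hμ hc0pos, mul_nonneg hγ hc0pos.le]
        exact aux_final hεepos hC0 hCh hεec0 hc0Θ hΘdef hKdef hFle hFlb
      · -- R touches zero
        obtain ⟨hx0I, hFle⟩ := aux_key L lam K ε t0 x0 R Rt Rx Rxx hL hlam hε ht0pos hx0
          (fun x hx => hRt t0 ht0Ioc x hx) (hRx t0 ht0Ioc) (hRxx t0 ht0Ioc)
          (hbcR t0 ht0Ioc).1 (hbcR t0 ht0Ioc).2 htouch
          (fun x hx => by have := hwR t0 ht0mem x hx; exact this)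
          (fun t ht => by have := hwR t ht x0 hx0; exact this)
        have hpde := heqR t0 ht0Ioc x0 hx0I
        have hRval : R t0 x0 = -c0 := by linarith
        have hF : Rt t0 x0 - lam * Rxx t0 x0 = η * E t0 x0 + γ * I t0 x0 + μ * c0 := by
          rw [hpde, hRval]; ring
        have hFlb : -(Θ * C0) ≤ Rt t0 x0 - lam * Rxx t0 x0 := by
          rw [hF, hC0def]
          have h1 : η * (-Θ) ≤ η * E t0 x0 := mul_le_mul_of_nonneg_left hEb.1 hη
          have h2 : γ * (-Θ) ≤ γ * I t0 x0 := mul_le_mul_of_nonneg_left hIb.1 hγ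
          linarith [mul_nonneg hΘpos.le (mul_nonneg hβ hM0), mul_nonneg hΘpos.le hδ,
            mul_pos hμ hc0pos]
        exact aux_final hεepos hC0 hCh hεec0 hc0Θ hΘdef hKdef hFle hFlb
    intro t ht x hx
    have hq : (t, x) ∈ Q := Set.mk_mem_prod ht hx
    have h0 := hgpos (t, x) hq
    exact ⟨le_trans h0 (hgS (t, x)), le_trans h0 (hgE (t, x)),
      le_trans h0 (hgI (t, x)), le_trans h0 (hgR (t, x))⟩
  -- pass to the limit ε → 0
  intro t ht x hx
  have hcpos : 0 < Real.exp (K * t) * Real.cosh (x - L / 2) :=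
    mul_pos (Real.exp_pos _) (Real.cosh_pos _)
  refine ⟨?_, ?_, ?_, ?_⟩ <;>
    [refine aux_limit hcpos (fun ε hε => ?_);
     refine aux_limit hcpos (fun ε hε => ?_);
     refine aux_limit hcpos (fun ε hε => ?_);
     refine aux_limit hcpos (fun ε hε => ?_)]
  · have := (main ε hε t ht x hx).1; linarith [this]
  · have := (main ε hε t ht x hx).2.1; linarith [this]
  · have := (main ε hε t ht x hx).2.2.1; linarith [this]
  · have := (main ε hε t ht x hx).2.2.2; linarith [this]
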